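/- Let n ∈ ℕ, let a, b ≥ 1, and let H be an induced subgraph of the shift graph G_{n,2} that contains no induced subgraph isomorphic to the complete bipartite graph K_{a,b}. Then χ(H) ≤ k*, where k* is the least natural number k with a + b ≤ C(k, ⌊k/2⌋) (binomial coefficient); in particular χ(H) = O(log(a+b)). -/

import Mathlib

open SimpleGraph

/-- The shift graph `G_{n,2}`: vertices are pairs `(i,j)` with `i < j` in `Fin n`,
and `(i,j)` is adjacent to `(k,l)` iff `j = k` or `l = i`. -/
def ShiftGraph (n : ℕ) : SimpleGraph {p : Fin n × Fin n // p.1 < p.2} :=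
  SimpleGraph.fromRel (fun p q => p.1.2 = q.1.1)

/-- The arcs of a digraph `D`. -/
def Arcs {V : Type} (D : V → V → Prop) : Type := {e : V × V // D e.1 e.2}

/-- The line digraph `L⃗(D)`: there is an arc from `(a,b)` to `(c,d)` iff `b = c`. -/
def LineDigraph {V : Type} (D : V → V → Prop) : Arcs D → Arcs D → Prop :=
  fun e f => e.1.2 = f.1.1

/-- The underlying undirected (simple) graph of a digraph. -/
def UG {V : Type} (D : V → V → Prop) : SimpleGraph V := SimpleGraph.fromRel D

/-- The undirected line graph `L(D)`: the underlying undirected graph of the line digraph,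
in which two arcs are adjacent iff the head of one equals the tail of the other. -/
def LineGraph {V : Type} (D : V → V → Prop) : SimpleGraph (Arcs D) :=
  UG (LineDigraph D)

/-- A digraph is an oriented graph if its arc relation is irreflexive and between any
two vertices at most one of the two opposite arcs is present. -/
def Oriented {V : Type} (D : V → V → Prop) : Prop :=
  Irreflexive D ∧ ∀ a b, D a b → ¬ D b a

/-- A digraph is acyclic if it contains no directed cycle, equivalently no vertex is
reachable from itself by a nonempty directed walk. -/
def DigraphAcyclic {V : Type} (D : V → V → Prop) : Prop :=
  ∀ v, ¬ Relation.TransGen D v v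

/-- The iterated line digraph: `(IterLine V D g).1` is the vertex type of `L⃗^g(D)` and
`(IterLine V D g).2` is its arc relation. -/
def IterLine (V : Type) (D : V → V → Prop) : ℕ → (W : Type) × (W → W → Prop)
  | 0 => ⟨V, D⟩
  | g + 1 => ⟨Arcs (IterLine V D g).2, LineDigraph (IterLine V D g).2⟩

/-- `l` is (the list of vertices of) a directed path from `x` to `y` in the digraph `D`:
consecutive vertices are joined by arcs, the vertices are pairwise distinct, and the
list starts at `x` and ends at `y`. -/
def IsDipath {V : Type} (D : V → V → Prop) (x y : V) (l : List V) : Prop :=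
  l.Chain' D ∧ l.head? = some x ∧ l.getLast? = some y ∧ l.Nodup

/-- A digraph has at most one directed path from any vertex to any other vertex. -/
def UniqueDipaths {V : Type} (D : V → V → Prop) : Prop :=
  ∀ x y l₁ l₂, IsDipath D x y l₁ → IsDipath D x y l₂ → l₁ = l₂

/-- `D` is an orientation of the simple graph `G`. -/
def IsOrientationOf {V : Type} (G : SimpleGraph V) (D : V → V → Prop) : Prop :=
  (∀ a b, D a b → G.Adj a b) ∧ (∀ a b, G.Adj a b → (D a b ∨ D b a)) ∧
    (∀ a b, D a b → ¬ D b a)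

/-- A simple graph has the AOP property if it admits an acyclic orientation with at most
one directed path between any ordered pair of vertices. -/
def HasAOP {V : Type} (G : SimpleGraph V) : Prop :=
  ∃ D : V → V → Prop, IsOrientationOf G D ∧ DigraphAcyclic D ∧ UniqueDipaths D

/-- The tower function: `Tower g x` is `2^(2^(⋯^x))` with `g` twos. -/
def Tower : ℕ → ℕ → ℕ
  | 0, x => x
  | i + 1, x => 2 ^ Tower i x

/-- The graph `G` has degeneracy at most `k`: every nonempty (induced subgraph on a) set
of vertices contains a vertex with at most `k` neighbours inside the set. -/
def DegenLE {V : Type} (G : SimpleGraph V) (k : ℕ) : Prop :=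
  ∀ s : Set V, s.Nonempty → ∃ v ∈ s, ({u ∈ s | G.Adj v u} : Set V).ncard ≤ k

open scoped Classical

namespace Stmt10Aux

def Arc {n : ℕ} (S : Set {p : Fin n × Fin n // p.1 < p.2}) (i j : Fin n) : Prop :=
  ∃ h : i < j, (⟨(i, j), h⟩ : {p : Fin n × Fin n // p.1 < p.2}) ∈ S

noncomputable def Din {n : ℕ} (S : Set {p : Fin n × Fin n // p.1 < p.2}) (j : Fin n) :
    Finset (Fin n) := Finset.univ.filter (fun i => Arc S i j)

noncomputable def Dout {n : ℕ} (S : Set {p : Fin n × Fin n // p.1 < p.2}) (j : Fin n) :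
    Finset (Fin n) := Finset.univ.filter (fun l => Arc S j l)

lemma lt_of_mem_Din {n : ℕ} {S : Set {p : Fin n × Fin n // p.1 < p.2}} {i j : Fin n}
    (h : i ∈ Din S j) : i < j := by
  simp only [Din, Finset.mem_filter, Finset.mem_univ, true_and] at h
  exact h.1

lemma lt_of_mem_Dout {n : ℕ} {S : Set {p : Fin n × Fin n // p.1 < p.2}} {l j : Fin n}
    (h : l ∈ Dout S j) : j < l := by
  simp only [Dout, Finset.mem_filter, Finset.mem_univ, true_and] at h
  exact h.1

noncomputable def gA (n a : ℕ) (ha : 0 < a) (S : Set {p : Fin n × Fin n // p.1 < p.2}) :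
    Fin n → Fin a
  | v =>
    if h : (Finset.univ \ (((Din S v).filter fun u => (Din S u).card < a).attach.image
        fun u => gA n a ha S u.1)).Nonempty then h.choose else ⟨0, ha⟩
termination_by v => v.val
decreasing_by
  all_goals exact lt_of_mem_Din (Finset.mem_filter.mp u.2).1

noncomputable def gB (n a b : ℕ) (hb : 0 < b) (S : Set {p : Fin n × Fin n // p.1 < p.2}) :
    Fin n → Fin b
  | v =>
    if h : (Finset.univ \ (((Dout S v).filter fun w => a ≤ (Din S w).card).attach.image
        fun w => gB n a b hb S w.1)).Nonempty then h.choose else ⟨0, hb⟩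
termination_by v => n - v.val
decreasing_by
  all_goals
    have h1 : v < w.1 := lt_of_mem_Dout (Finset.mem_filter.mp w.2).1
    have h2 : w.1.val < n := w.1.isLt
    simp only [v] at h1
    omega

lemma gA_spec {n a : ℕ} (ha : 0 < a) (S : Set {p : Fin n × Fin n // p.1 < p.2})
    {v : Fin n} (hv : (Din S v).card < a) {u : Fin n} (hu : u ∈ Din S v)
    (huA : (Din S u).card < a) : gA n a ha S u ≠ gA n a ha S v := by
  conv_rhs => rw [gA]
  set used := (((Din S v).filter fun u => (Din S u).card < a).attach.image
      fun u => gA n a ha S u.1) with hused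
  have hne : ((Finset.univ : Finset (Fin a)) \ used).Nonempty := by
    rw [Finset.sdiff_nonempty]
    intro hsub
    have h1 : (Finset.univ : Finset (Fin a)).card ≤ used.card := Finset.card_le_card hsub
    have h2 : used.card ≤ ((Din S v).filter fun u => (Din S u).card < a).card := by
      rw [hused]
      exact (Finset.card_image_le).trans (by rw [Finset.card_attach])
    have h3 : ((Din S v).filter fun u => (Din S u).card < a).card ≤ (Din S v).card :=
      Finset.card_filter_le _ _
    simp [Finset.card_univ] at h1
    omega
  rw [dif_pos hne]
  have hmem : gA n a ha S u ∈ used := by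
    rw [hused]
    exact Finset.mem_image.mpr ⟨⟨u, Finset.mem_filter.mpr ⟨hu, huA⟩⟩, Finset.mem_attach _ _, rfl⟩
  have hchoose := hne.choose_spec
  rw [Finset.mem_sdiff] at hchoose
  intro heq
  exact hchoose.2 (heq ▸ hmem)

lemma gB_spec {n a b : ℕ} (hb : 0 < b) (S : Set {p : Fin n × Fin n // p.1 < p.2})
    {v : Fin n} (hv : (Dout S v).card < b) {w : Fin n} (hw : w ∈ Dout S v)
    (hwB : a ≤ (Din S w).card) : gB n a b hb S w ≠ gB n a b hb S v := by
  conv_rhs => rw [gB]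
  set used := (((Dout S v).filter fun w => a ≤ (Din S w).card).attach.image
      fun w => gB n a b hb S w.1) with hused
  have hne : ((Finset.univ : Finset (Fin b)) \ used).Nonempty := by
    rw [Finset.sdiff_nonempty]
    intro hsub
    have h1 : (Finset.univ : Finset (Fin b)).card ≤ used.card := Finset.card_le_card hsub
    have h2 : used.card ≤ ((Dout S v).filter fun w => a ≤ (Din S w).card).card := by
      rw [hused]
      exact (Finset.card_image_le).trans (by rw [Finset.card_attach])
    have h3 : ((Dout S v).filter fun w => a ≤ (Din S w).card).card ≤ (Dout S v).card :=
      Finset.card_filter_le _ _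
    simp [Finset.card_univ] at h1
    omega
  rw [dif_pos hne]
  have hmem : gB n a b hb S w ∈ used := by
    rw [hused]
    exact Finset.mem_image.mpr ⟨⟨w, Finset.mem_filter.mpr ⟨hw, hwB⟩⟩, Finset.mem_attach _ _, rfl⟩
  have hchoose := hne.choose_spec
  rw [Finset.mem_sdiff] at hchoose
  intro heq
  exact hchoose.2 (heq ▸ hmem)

lemma key {n a b : ℕ} (S : Set {p : Fin n × Fin n // p.1 < p.2})
    (hfree : IsEmpty
      (completeBipartiteGraph (Fin a) (Fin b) ↪g (ShiftGraph n).induce S))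
    (j : Fin n) : (Din S j).card < a ∨ (Dout S j).card < b := by
  by_contra h
  push_neg at h
  obtain ⟨hA, hB⟩ := h
  apply hfree.false
  set e1 := (Din S j).orderEmbOfCardLe hA with he1
  set e2 := (Dout S j).orderEmbOfCardLe hB with he2
  have he1m : ∀ t, e1 t ∈ Din S j := fun t => (Din S j).orderEmbOfCardLe_mem hA t
  have he2m : ∀ t, e2 t ∈ Dout S j := fun t => (Dout S j).orderEmbOfCardLe_mem hB t
  have he1arc : ∀ t, Arc S (e1 t) j := by
    intro t; have := he1m t; simp only [Din, Finset.mem_filter, Finset.mem_univ, true_and] at this; exact this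
  have he2arc : ∀ t, Arc S j (e2 t) := by
    intro t; have := he2m t; simp only [Dout, Finset.mem_filter, Finset.mem_univ, true_and] at this; exact this
  -- the map
  let f : Fin a ⊕ Fin b → ↥S := fun x => match x with
    | Sum.inl t => ⟨⟨(e1 t, j), (he1arc t).choose⟩, (he1arc t).choose_spec⟩
    | Sum.inr t => ⟨⟨(j, e2 t), (he2arc t).choose⟩, (he2arc t).choose_spec⟩
  have adj_iff : ∀ x y : ↥S, (((ShiftGraph n).induce S).Adj x y) ↔
      ((x : {p : Fin n × Fin n // p.1 < p.2}) ≠ (y : {p : Fin n × Fin n // p.1 < p.2}) ∧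
        ((x : {p : Fin n × Fin n // p.1 < p.2}).1.2 = (y : {p : Fin n × Fin n // p.1 < p.2}).1.1 ∨
         (y : {p : Fin n × Fin n // p.1 < p.2}).1.2 = (x : {p : Fin n × Fin n // p.1 < p.2}).1.1)) :=
    fun x y => Iff.rfl
  refine RelEmbedding.mk ⟨f, ?_⟩ ?_
  · -- injective
    rintro (t | t) (s | s) hx <;>
      simp only [f, Subtype.mk.injEq, Prod.mk.injEq] at hx
    · exact congrArg Sum.inl (e1.injective hx.1)
    · exact absurd hx.1 (ne_of_lt (he1arc t).choose)
    · exact absurd hx.1.symm (ne_of_lt (he1arc s).choose)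
    · exact congrArg Sum.inr (e2.injective hx.2)
  · -- map_rel_iff
    rintro (t | t) (s | s) <;> rw [adj_iff]
    · constructor
      · rintro ⟨-, h1 | h1⟩
        · exact absurd h1.symm (ne_of_lt (he1arc s).choose)
        · exact absurd h1.symm (ne_of_lt (he1arc t).choose)
      · intro h
        rcases h with ⟨-, h2⟩ | ⟨h2, -⟩ <;> simp at h2
    · constructor
      · intro _; exact Or.inl ⟨rfl, rfl⟩
      · intro _
        refine ⟨?_, Or.inl rfl⟩
        intro heq
        have : e1 t = j := congrArg (fun p => (Subtype.val p).1) heq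
        exact (ne_of_lt (he1arc t).choose) this
    · constructor
      · intro _; exact Or.inr ⟨rfl, rfl⟩
      · intro _
        refine ⟨?_, Or.inr rfl⟩
        intro heq
        have : j = e1 s := congrArg (fun p => (Subtype.val p).1) heq
        exact (ne_of_lt (he1arc s).choose) this.symm
    · constructor
      · rintro ⟨-, h1 | h1⟩
        · exact absurd h1.symm (ne_of_lt (he2arc t).choose)
        · exact absurd h1.symm (ne_of_lt (he2arc s).choose)
      · intro h
        rcases h with ⟨h2, -⟩ | ⟨-, h2⟩ <;> simp at h2


end Stmt10Aux

/-- Any induced subgraph `H` of the shift graph `G_{n,2}` with no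
induced copy of `K_{a,b}` (`a, b ≥ 1`) satisfies `χ(H) ≤ k*`, where `k*` is the least
`k` with `a + b ≤ C(k, ⌊k/2⌋)`: for every such `k`, `H` is `k`-colorable. -/
theorem stmt_10 (n a b : ℕ) (ha : 1 ≤ a) (hb : 1 ≤ b)
    (S : Set {p : Fin n × Fin n // p.1 < p.2})
    (hfree : IsEmpty
      (completeBipartiteGraph (Fin a) (Fin b) ↪g (ShiftGraph n).induce S))
    (k : ℕ) (hk : a + b ≤ Nat.choose k (k / 2)) :
    ((ShiftGraph n).induce S).Colorable k := by
  classical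
  have hkey : ∀ j : Fin n, (Stmt10Aux.Din S j).card < a ∨ (Stmt10Aux.Dout S j).card < b :=
    fun j => Stmt10Aux.key S hfree j
  have hcard : Fintype.card (Fin (a + b)) ≤
      Fintype.card ↥(Finset.univ.powersetCard (k / 2) : Finset (Finset (Fin k))) := by
    rw [Fintype.card_coe, Finset.card_powersetCard, Finset.card_univ, Fintype.card_fin,
      Fintype.card_fin]
    exact hk
  obtain ⟨ψ0⟩ := Function.Embedding.nonempty_of_card_le hcard
  set ψ : Fin (a + b) → Finset (Fin k) := fun i => (ψ0 i).1 with hψ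
  have hψinj : Function.Injective ψ := fun i j h => ψ0.injective (Subtype.ext h)
  have hψcard : ∀ i, (ψ i).card = k / 2 := fun i =>
    (Finset.mem_powersetCard.mp (ψ0 i).2).2
  set g : Fin n → Fin (a + b) := fun v =>
    finSumFinEquiv (if (Stmt10Aux.Din S v).card < a then Sum.inl (Stmt10Aux.gA n a ha S v)
      else Sum.inr (Stmt10Aux.gB n a b hb S v)) with hgdef
  have hg : ∀ u v, Stmt10Aux.Arc S u v → g u ≠ g v := by
    intro u v harc heq
    have huin : u ∈ Stmt10Aux.Din S v := by
      simp only [Stmt10Aux.Din, Finset.mem_filter, Finset.mem_univ, true_and]; exact harc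
    have hvout : v ∈ Stmt10Aux.Dout S u := by
      simp only [Stmt10Aux.Dout, Finset.mem_filter, Finset.mem_univ, true_and]; exact harc
    simp only [hgdef] at heq
    have heq' := finSumFinEquiv.injective heq
    by_cases hu : (Stmt10Aux.Din S u).card < a <;>
      by_cases hv : (Stmt10Aux.Din S v).card < a
    · rw [if_pos hu, if_pos hv] at heq'
      exact Stmt10Aux.gA_spec ha S hv huin hu (Sum.inl.inj heq')
    · rw [if_pos hu, if_neg hv] at heq'; exact Sum.inl_ne_inr heq'
    · rw [if_neg hu, if_pos hv] at heq'; exact Sum.inr_ne_inl heq'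
    · rw [if_neg hu, if_neg hv] at heq'
      have hub : (Stmt10Aux.Dout S u).card < b := (hkey u).resolve_left hu
      exact Stmt10Aux.gB_spec hb S hub hvout (le_of_not_gt hv) (Sum.inr.inj heq').symm
  set F : Fin n → Finset (Fin k) := fun v => ψ (g v) with hFdef
  have hF : ∀ u v, Stmt10Aux.Arc S u v → (F u \ F v).Nonempty := by
    intro u v harc
    rw [Finset.sdiff_nonempty]
    intro hsub
    have hle : (F v).card ≤ (F u).card := le_of_eq ((hψcard _).trans (hψcard _).symm)
    have : F u = F v := Finset.eq_of_subset_of_card_le hsub hle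
    exact hg u v harc (hψinj this)
  have harcp : ∀ p : ↥S, Stmt10Aux.Arc S p.1.1.1 p.1.1.2 := fun p => ⟨p.1.2, p.2⟩
  refine ⟨SimpleGraph.Coloring.mk
    (fun p => (F p.1.1.1 \ F p.1.1.2).min' (hF _ _ (harcp p))) ?_⟩
  intro p q hadj heq
  beta_reduce at heq
  have hadj' : (↑p : {p : Fin n × Fin n // p.1 < p.2}) ≠ ↑q ∧
      ((↑p : {p : Fin n × Fin n // p.1 < p.2}).1.2 = (↑q : {p : Fin n × Fin n // p.1 < p.2}).1.1 ∨
       (↑q : {p : Fin n × Fin n // p.1 < p.2}).1.2 = (↑p : {p : Fin n × Fin n // p.1 < p.2}).1.1) :=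
    hadj
  obtain ⟨-, hor⟩ := hadj'
  have hp := Finset.min'_mem _ (hF _ _ (harcp p))
  have hq := Finset.min'_mem _ (hF _ _ (harcp q))
  rw [Finset.mem_sdiff] at hp hq
  rcases hor with h1 | h1
  · have hmem : (F q.1.1.1 \ F q.1.1.2).min' (hF _ _ (harcp q)) ∈ F p.1.1.2 := by
      rw [h1]; exact hq.1
    rw [← heq] at hmem
    exact hp.2 hmem
  · have hmem : (F p.1.1.1 \ F p.1.1.2).min' (hF _ _ (harcp p)) ∈ F q.1.1.2 := by
      rw [h1]; exact hp.1
    rw [heq] at hmem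
    exact hq.2 hmem
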